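/- Let (π_t)_{t≥0} be the semigroup of bounded kernels on (0,∞) defined by π_t f(x) = f(x−t) + ∫₀^t α(x−s) g'(x−s,1−) ⟨G, π_{t−s} f⟩ ds, and let V(x) = ∫₀^∞ α(x−s) g'(x−s,1−) e^{−α̃ s} ds, where ∫₀^∞ e^{−α̃ s} F(ds) = 1 with F(ds) = (∫_s^∞ α(x−s) g'(x−s,1−) G(dx)) ds. Then π_t V(x) = e^{α̃ t} V(x) for all t ≥ 0 and x ∈ (0,∞). -/
import Mathlib


open MeasureTheory Real Set

/-- The function `V(x) = ∫₀^∞ α(x−s) g'(x−s,1−) e^{−α̃ s} ds` is an eigenfunction of the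
mean semigroup `π_t f(x) = f(x−t) + ∫₀ᵗ α(x−s) g'(x−s,1−) ⟨G, pk_{t−s} f⟩ ds`:
`π_t V = e^{α̃ t} V`, given the Malthusian normalization `⟨G, V⟩ = 1`. -/
theorem stmt9 (G : Measure ℝ) [IsProbabilityMeasure G] (hG : G (Set.Iic 0) = 0)
    (α g' : ℝ → ℝ) (hα_meas : Measurable α) (hg_meas : Measurable g')
    (hα_nonneg : ∀ x, 0 ≤ α x) (hg_nonneg : ∀ x, 0 ≤ g' x)
    (β : ℝ) (hβ : ∀ x, α x * g' x ≤ β)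
    (hα_zero : ∀ u ≤ (0:ℝ), α u = 0) (hg_zero : ∀ u ≤ (0:ℝ), g' u = 0)
    (a : ℝ) (ha : 0 < a)
    (V : ℝ → ℝ)
    (hV : ∀ x, V x = ∫ s in Set.Ioi (0:ℝ), α (x - s) * g' (x - s) * Real.exp (-(a * s)))
    (hMalthus : ∫ x, V x ∂G = 1)
    (pk : ℝ → ℝ → ℝ)
    (hpk_meas : Measurable fun q : ℝ × ℝ => pk q.1 q.2)
    (hpk_bdd : ∀ T > (0:ℝ), ∃ C : ℝ, ∀ t ∈ Set.Icc (0:ℝ) T, ∀ x, |pk t x| ≤ C)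
    (hpk_eq : ∀ t ≥ (0:ℝ), ∀ x, pk t x = V (x - t) +
      ∫ s in Set.Ioc (0:ℝ) t, α (x - s) * g' (x - s) * ∫ y, pk (t - s) y ∂G) :
    ∀ t ≥ (0:ℝ), ∀ x, pk t x = Real.exp (a * t) * V x := by
  have hβ0 : (0:ℝ) ≤ β := le_trans (mul_nonneg (hα_nonneg 0) (hg_nonneg 0)) (hβ 0)
  set k : ℝ → ℝ := fun u => α u * g' u with hkdef
  have hk_meas : Measurable k := hα_meas.mul hg_meas
  have hk_nonneg : ∀ u, 0 ≤ k u := fun u => mul_nonneg (hα_nonneg u) (hg_nonneg u)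
  have hk_bd : ∀ u, k u ≤ β := hβ
  -- integrability of the exponential weight
  have hexp_int : IntegrableOn (fun s => Real.exp (-(a * s))) (Set.Ioi (0:ℝ)) := by
    simpa [neg_mul] using exp_neg_integrableOn_Ioi (0:ℝ) ha
  -- integrability of the V integrand
  have hint : ∀ x, IntegrableOn (fun s => k (x - s) * Real.exp (-(a * s))) (Set.Ioi (0:ℝ)) := by
    intro x
    refine Integrable.mono' (hexp_int.const_mul β) ?_ ?_
    · exact ((hk_meas.comp (measurable_const.sub measurable_id)).mul
        ((measurable_id.const_mul a).neg.exp)).aestronglyMeasurable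
    · filter_upwards with s
      rw [Real.norm_eq_abs, abs_mul, abs_of_nonneg (hk_nonneg _), abs_of_pos (Real.exp_pos _)]
      exact mul_le_mul_of_nonneg_right (hk_bd _) (Real.exp_pos _).le
  -- measurability of V
  have hVmeas : Measurable V := by
    have hsm : StronglyMeasurable fun p : ℝ × ℝ => k (p.1 - p.2) * Real.exp (-(a * p.2)) :=
      ((hk_meas.comp (measurable_fst.sub measurable_snd)).mul
        ((measurable_snd.const_mul a).neg.exp)).stronglyMeasurable
    have h2 := hsm.integral_prod_right' (ν := volume.restrict (Set.Ioi (0:ℝ)))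
    have hVe : V = fun x => ∫ s in Set.Ioi (0:ℝ), k (x - s) * Real.exp (-(a * s)) :=
      funext fun x => hV x
    rw [hVe]
    exact h2.measurable
  -- boundedness of V
  set I : ℝ := ∫ s in Set.Ioi (0:ℝ), Real.exp (-(a * s)) with hIdef
  have hI0 : 0 ≤ I := setIntegral_nonneg measurableSet_Ioi (fun s _ => (Real.exp_pos _).le)
  have hVnonneg : ∀ x, 0 ≤ V x := by
    intro x
    rw [hV x]
    exact setIntegral_nonneg measurableSet_Ioi
      (fun s _ => mul_nonneg (hk_nonneg _) (Real.exp_pos _).le)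
  have hVbd : ∀ x, |V x| ≤ β * I := by
    intro x
    rw [abs_of_nonneg (hVnonneg x), hV x]
    calc (∫ s in Set.Ioi (0:ℝ), k (x - s) * Real.exp (-(a * s)))
        ≤ ∫ s in Set.Ioi (0:ℝ), β * Real.exp (-(a * s)) := by
          refine setIntegral_mono_on (hint x) (hexp_int.const_mul β) measurableSet_Ioi ?_
          intro s _
          exact mul_le_mul_of_nonneg_right (hk_bd _) (Real.exp_pos _).le
      _ = β * I := by rw [hIdef, integral_const_mul]
  -- the mean mass and its deviation from the exponential
  set m : ℝ → ℝ := fun t => ∫ y, pk t y ∂G with hmdef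
  have hm_meas : Measurable m :=
    (hpk_meas.stronglyMeasurable.integral_prod_right' (ν := G)).measurable
  set ψ : ℝ → ℝ := fun t => m t - Real.exp (a * t) with hψdef
  have hψ_meas : Measurable ψ := hm_meas.sub ((measurable_id.const_mul a).exp)
  -- bound of m on compact time intervals
  have hmBd : ∀ T > (0:ℝ), ∃ C : ℝ, 0 ≤ C ∧ ∀ u ∈ Set.Icc (0:ℝ) T, |m u| ≤ C := by
    intro T hT
    obtain ⟨C, hC⟩ := hpk_bdd T hT
    have hC0 : 0 ≤ C := le_trans (abs_nonneg _) (hC 0 ⟨le_rfl, hT.le⟩ 0)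
    refine ⟨C, hC0, fun u hu => ?_⟩
    have := norm_integral_le_of_norm_le_const (μ := G) (C := C)
      (f := fun y => pk u y)
      (Filter.Eventually.of_forall fun y => by simpa [Real.norm_eq_abs] using hC u hu y)
    simpa [Real.norm_eq_abs, measure_univ] using this
  -- eigen-identity for the exponential profile
  have heig : ∀ t ≥ (0:ℝ), ∀ x, Real.exp (a * t) * V x =
      V (x - t) + ∫ s in Set.Ioc (0:ℝ) t, k (x - s) * Real.exp (a * (t - s)) := by
    intro t ht x
    have hsplit : (Set.Ioi (0:ℝ)) = Set.Ioc 0 t ∪ Set.Ioi t := (Ioc_union_Ioi_eq_Ioi ht).symm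
    have hi1 : IntegrableOn (fun s => k (x - s) * Real.exp (-(a * s))) (Set.Ioc 0 t) :=
      (hint x).mono_set Ioc_subset_Ioi_self
    have hi2 : IntegrableOn (fun s => k (x - s) * Real.exp (-(a * s))) (Set.Ioi t) :=
      (hint x).mono_set (Ioi_subset_Ioi ht)
    have hVx : V x = (∫ s in Set.Ioc (0:ℝ) t, k (x - s) * Real.exp (-(a * s)))
        + ∫ s in Set.Ioi t, k (x - s) * Real.exp (-(a * s)) := by
      rw [hV x, hsplit, setIntegral_union (Ioc_disjoint_Ioi le_rfl) measurableSet_Ioi hi1 hi2]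
    have h1 : Real.exp (a * t) * ∫ s in Set.Ioc (0:ℝ) t, k (x - s) * Real.exp (-(a * s))
        = ∫ s in Set.Ioc (0:ℝ) t, k (x - s) * Real.exp (a * (t - s)) := by
      rw [← integral_const_mul]
      refine setIntegral_congr_fun measurableSet_Ioc fun s _ => ?_
      rw [mul_left_comm, ← Real.exp_add, show a * t + -(a * s) = a * (t - s) by ring]
    have h2 : Real.exp (a * t) * ∫ s in Set.Ioi t, k (x - s) * Real.exp (-(a * s))
        = V (x - t) := by
      have hshift : (∫ s in Set.Ioi t, k (x - s) * Real.exp (-(a * s)))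
          = ∫ u in Set.Ioi (0:ℝ), k (x - (u + t)) * Real.exp (-(a * (u + t))) := by
        rw [← integral_indicator measurableSet_Ioi, ← integral_indicator measurableSet_Ioi]
        rw [← integral_add_right_eq_self (μ := volume)
          ((Set.Ioi t).indicator fun s => k (x - s) * Real.exp (-(a * s))) t]
        congr 1
        funext u
        rw [Set.indicator_apply, Set.indicator_apply]
        simp only [Set.mem_Ioi]
        by_cases h : 0 < u
        · rw [if_pos (by linarith), if_pos h]
        · rw [if_neg (fun hc => h (by linarith)), if_neg h]
      rw [hshift, hV (x - t), ← integral_const_mul]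
      refine setIntegral_congr_fun measurableSet_Ioi fun u _ => ?_
      rw [show x - (u + t) = x - t - u by ring, mul_left_comm, ← Real.exp_add,
        show a * t + -(a * (u + t)) = -(a * u) by ring]
    calc Real.exp (a * t) * V x
        = Real.exp (a * t) * (∫ s in Set.Ioc (0:ℝ) t, k (x - s) * Real.exp (-(a * s)))
          + Real.exp (a * t) * (∫ s in Set.Ioi t, k (x - s) * Real.exp (-(a * s))) := by
          rw [hVx]; ring
      _ = V (x - t) + ∫ s in Set.Ioc (0:ℝ) t, k (x - s) * Real.exp (a * (t - s)) := by
          rw [h1, h2]; ring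
  -- integrability helper on Ioc 0 t
  have hIb : ∀ (c : ℝ → ℝ), Measurable c → ∀ (t x M' : ℝ),
      (∀ u ∈ Set.Ico (0:ℝ) t, |c u| ≤ M') →
      IntegrableOn (fun s => k (x - s) * c (t - s)) (Set.Ioc (0:ℝ) t) := by
    intro c hc t x M' hM'
    refine Measure.integrableOn_of_bounded (M := β * M') measure_Ioc_lt_top.ne ?_ ?_
    · exact ((hk_meas.comp (measurable_const.sub measurable_id)).mul
        (hc.comp (measurable_const.sub measurable_id))).aestronglyMeasurable
    · filter_upwards [ae_restrict_mem measurableSet_Ioc] with s hs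
      have h1 : t - s ∈ Set.Ico (0:ℝ) t := ⟨by linarith [hs.2], by linarith [hs.1]⟩
      rw [Real.norm_eq_abs, abs_mul, abs_of_nonneg (hk_nonneg _)]
      exact mul_le_mul (hk_bd _) (hM' _ h1) (abs_nonneg _) hβ0
  -- the key identity: pk t x − e^{at} V x = ∫ k(x−s) ψ(t−s) ds
  have hhid : ∀ t ≥ (0:ℝ), ∀ x, pk t x - Real.exp (a * t) * V x
      = ∫ s in Set.Ioc (0:ℝ) t, k (x - s) * ψ (t - s) := by
    intro t ht x
    obtain ⟨C, hC0, hC⟩ : ∃ C : ℝ, 0 ≤ C ∧ ∀ u ∈ Set.Icc (0:ℝ) t, |m u| ≤ C := by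
      obtain ⟨C, hC0, hC⟩ := hmBd (t + 1) (by linarith)
      exact ⟨C, hC0, fun u hu => hC u ⟨hu.1, by linarith [hu.2]⟩⟩
    have him : IntegrableOn (fun s => k (x - s) * m (t - s)) (Set.Ioc (0:ℝ) t) :=
      hIb m hm_meas t x C (fun u hu => hC u ⟨hu.1, hu.2.le⟩)
    have hie : IntegrableOn (fun s => k (x - s) * Real.exp (a * (t - s))) (Set.Ioc (0:ℝ) t) := by
      refine hIb (fun u => Real.exp (a * u)) ((measurable_id.const_mul a).exp) t x
        (Real.exp (a * t)) (fun u hu => ?_)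
      rw [abs_of_pos (Real.exp_pos _)]
      exact Real.exp_le_exp.2 (mul_le_mul_of_nonneg_left hu.2.le ha.le)
    have hpe : pk t x = V (x - t) + ∫ s in Set.Ioc (0:ℝ) t, k (x - s) * m (t - s) := by
      simpa [hkdef, hmdef] using hpk_eq t ht x
    rw [hpe, heig t ht x]
    have : (∫ s in Set.Ioc (0:ℝ) t, k (x - s) * m (t - s))
        - (∫ s in Set.Ioc (0:ℝ) t, k (x - s) * Real.exp (a * (t - s)))
        = ∫ s in Set.Ioc (0:ℝ) t, k (x - s) * ψ (t - s) := by
      rw [← integral_sub him hie]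
      refine setIntegral_congr_fun measurableSet_Ioc fun s _ => ?_
      simp [hψdef, mul_sub]
    linarith [this]
  -- integrability w.r.t. G
  have hpkInt : ∀ t ≥ (0:ℝ), Integrable (fun y => pk t y) G := by
    intro t ht
    obtain ⟨C, hC⟩ := hpk_bdd (t + 1) (by linarith)
    refine Integrable.mono' (integrable_const C) ?_ ?_
    · exact (hpk_meas.comp (measurable_const.prodMk measurable_id)).aestronglyMeasurable
    · filter_upwards with y
      simpa [Real.norm_eq_abs] using hC t ⟨ht, by linarith⟩ y
  have hVInt : Integrable V G := by
    refine Integrable.mono' (integrable_const (β * I)) hVmeas.aestronglyMeasurable ?_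
    filter_upwards with y
    simpa [Real.norm_eq_abs] using hVbd y
  -- ψ as an integral of the deviation
  have hψeq : ∀ t ≥ (0:ℝ), ψ t = ∫ y, (pk t y - Real.exp (a * t) * V y) ∂G := by
    intro t ht
    rw [integral_sub (hpkInt t ht) (hVInt.const_mul _), integral_const_mul, hMalthus, mul_one]
  -- ψ vanishes on [0,∞)
  have hψ0 : ∀ t ≥ (0:ℝ), ψ t = 0 := by
    intro t ht
    set T : ℝ := t + 1 with hTdef
    have hT : 0 < T := by linarith
    obtain ⟨C, hC0, hmB⟩ := hmBd T hT
    set M : ℝ := C + Real.exp (a * T) with hMdef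
    have hM0 : 0 ≤ M := by positivity
    have hψB : ∀ u ∈ Set.Icc (0:ℝ) T, |ψ u| ≤ M := by
      intro u hu
      have h1 : |ψ u| ≤ |m u| + |Real.exp (a * u)| := by
        simpa [hψdef, sub_eq_add_neg] using abs_add_le (m u) (-Real.exp (a * u))
      have h2 : |Real.exp (a * u)| ≤ Real.exp (a * T) := by
        rw [abs_of_pos (Real.exp_pos _)]
        exact Real.exp_le_exp.2 (mul_le_mul_of_nonneg_left hu.2 ha.le)
      calc |ψ u| ≤ |m u| + |Real.exp (a * u)| := h1
        _ ≤ C + Real.exp (a * T) := add_le_add (hmB u hu) h2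
        _ = M := rfl
    have main : ∀ n : ℕ, ∀ u ∈ Set.Icc (0:ℝ) T, |ψ u| ≤ M * β ^ n * u ^ n / n.factorial := by
      intro n
      induction n with
      | zero => intro u hu; simpa using hψB u hu
      | succ n ih =>
        intro u hu
        have hu0 : (0:ℝ) ≤ u := hu.1
        have hB : ∀ y : ℝ, |pk u y - Real.exp (a * u) * V y|
            ≤ M * β ^ (n + 1) * u ^ (n + 1) / (n + 1).factorial := by
          intro y
          rw [hhid u hu0 y]
          have hψIby : IntegrableOn (fun s => k (y - s) * ψ (u - s)) (Set.Ioc (0:ℝ) u) :=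
            hIb ψ hψ_meas u y M (fun v hv => hψB v ⟨hv.1, le_trans hv.2.le hu.2⟩)
          have hg_int : IntegrableOn
              (fun s => β * (M * β ^ n * (u - s) ^ n / n.factorial)) (Set.Ioc (0:ℝ) u) := by
            apply Continuous.integrableOn_Ioc
            exact continuous_const.mul
              ((continuous_const.mul ((continuous_const.sub continuous_id).pow n)).div_const _)
          have hpow : (∫ s in Set.Ioc (0:ℝ) u, (u - s) ^ n) = u ^ (n + 1) / (n + 1) := by
            rw [← intervalIntegral.integral_of_le hu0,
              intervalIntegral.integral_comp_sub_left (fun z => z ^ n) u]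
            simp [integral_pow]
          calc |(∫ s in Set.Ioc (0:ℝ) u, k (y - s) * ψ (u - s))|
              ≤ ∫ s in Set.Ioc (0:ℝ) u, |k (y - s) * ψ (u - s)| := by
                simpa [Real.norm_eq_abs, abs_mul] using
                  norm_integral_le_integral_norm (μ := volume.restrict (Set.Ioc (0:ℝ) u))
                    (f := fun s => k (y - s) * ψ (u - s))
            _ ≤ ∫ s in Set.Ioc (0:ℝ) u, β * (M * β ^ n * (u - s) ^ n / n.factorial) := by
                refine setIntegral_mono_on hψIby.abs hg_int measurableSet_Ioc fun s hs => ?_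
                have hus : u - s ∈ Set.Icc (0:ℝ) T :=
                  ⟨by linarith [hs.2], by linarith [hs.1, hu.2]⟩
                rw [abs_mul, abs_of_nonneg (hk_nonneg _)]
                exact mul_le_mul (hk_bd _) (ih (u - s) hus) (abs_nonneg _) hβ0
            _ = β * (M * β ^ n / n.factorial) * (∫ s in Set.Ioc (0:ℝ) u, (u - s) ^ n) := by
                rw [← integral_const_mul]
                refine setIntegral_congr_fun measurableSet_Ioc fun s _ => ?_
                ring
            _ = M * β ^ (n + 1) * u ^ (n + 1) / (n + 1).factorial := by
                rw [hpow, Nat.factorial_succ]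
                have hfac : (n.factorial : ℝ) ≠ 0 := Nat.cast_ne_zero.2 n.factorial_ne_zero
                have hn1 : ((n:ℝ) + 1) ≠ 0 := by positivity
                push_cast
                field_simp
                ring
        rw [hψeq u hu0]
        have := norm_integral_le_of_norm_le_const (μ := G)
          (C := M * β ^ (n + 1) * u ^ (n + 1) / (n + 1).factorial)
          (f := fun y => pk u y - Real.exp (a * u) * V y)
          (Filter.Eventually.of_forall fun y => by simpa [Real.norm_eq_abs] using hB y)
        simpa [Real.norm_eq_abs, measure_univ] using this
    -- let n → ∞
    have htT : t ∈ Set.Icc (0:ℝ) T := ⟨ht, by linarith⟩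
    have hlim : Filter.Tendsto (fun n : ℕ => M * ((β * t) ^ n / n.factorial))
        Filter.atTop (nhds 0) := by
      have := FloorSemiring.tendsto_pow_div_factorial_atTop (β * t)
      simpa using Filter.Tendsto.const_mul M this
    have hle : |ψ t| ≤ 0 := by
      refine ge_of_tendsto' hlim fun n => ?_
      calc |ψ t| ≤ M * β ^ n * t ^ n / n.factorial := main n t htT
        _ = M * ((β * t) ^ n / n.factorial) := by rw [mul_pow]; ring
    exact abs_eq_zero.mp (le_antisymm hle (abs_nonneg _))
  -- conclude
  intro t ht x
  have h := hhid t ht x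
  have hzero : (∫ s in Set.Ioc (0:ℝ) t, k (x - s) * ψ (t - s)) = 0 := by
    have hcongr : ∀ s ∈ Set.Ioc (0:ℝ) t, k (x - s) * ψ (t - s) = 0 := by
      intro s hs
      rw [hψ0 (t - s) (by linarith [hs.2])]
      ring
    rw [setIntegral_congr_fun measurableSet_Ioc hcongr]
    simp
  rw [hzero] at h
  linarith
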